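/- Let f : ℂ → ℂᴺ be holomorphic and nowhere vanishing, and let P(ξ) = (f(ξ)·f(ξ)†)/(f(ξ)†·f(ξ)), viewed as a smooth map ℝ² → Matrix (Fin N) (Fin N) ℂ via ξ₊ = x + iy. Then at every point P·∂₊P = 0 and ∂₋P·P = 0; consequently [∂₊P, P] = ∂₊P, [∂₋P, P] = −∂₋P, and the lowering image ∂₋P·P·∂₊P vanishes identically (Π₋P = 0). -/

import Mathlib

open Matrix

noncomputable section

attribute [local instance] Matrix.normedAddCommGroup Matrix.normedSpace

/-- The Wirtinger derivative `∂₊ = ½(∂/∂x − i ∂/∂y)` of a matrix-valued map on `ℝ²`. -/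
def dp {N : ℕ} (P : ℝ × ℝ → Matrix (Fin N) (Fin N) ℂ) (p : ℝ × ℝ) :
    Matrix (Fin N) (Fin N) ℂ :=
  (2 : ℂ)⁻¹ • (fderiv ℝ P p (1, 0) - Complex.I • fderiv ℝ P p (0, 1))

/-- The Wirtinger derivative `∂₋ = ½(∂/∂x + i ∂/∂y)` of a matrix-valued map on `ℝ²`. -/
def dm {N : ℕ} (P : ℝ × ℝ → Matrix (Fin N) (Fin N) ℂ) (p : ℝ × ℝ) :
    Matrix (Fin N) (Fin N) ℂ :=
  (2 : ℂ)⁻¹ • (fderiv ℝ P p (1, 0) + Complex.I • fderiv ℝ P p (0, 1))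


/-- The rank-one Hermitian projector `P = (f·f†)/(f†·f)` associated to a vector-valued map
`f : ℂ → ℂᴺ`, viewed as a map on `ℝ²` via `ξ₊ = x + iy`. -/
def projOf {N : ℕ} (f : ℂ → (Fin N → ℂ)) (p : ℝ × ℝ) : Matrix (Fin N) (Fin N) ℂ :=
  (star (f ((p.1 : ℂ) + (p.2 : ℂ) * Complex.I)) ⬝ᵥ f ((p.1 : ℂ) + (p.2 : ℂ) * Complex.I))⁻¹ •
    vecMulVec (f ((p.1 : ℂ) + (p.2 : ℂ) * Complex.I))
      (star (f ((p.1 : ℂ) + (p.2 : ℂ) * Complex.I)))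


def zc (p : ℝ × ℝ) : ℂ := (p.1 : ℂ) + (p.2 : ℂ) * Complex.I

def xiL : ℝ × ℝ →L[ℝ] ℂ := Complex.equivRealProdCLM.symm.toContinuousLinearMap

def Dent {N : ℕ} (f : ℂ → (Fin N → ℂ)) (p : ℝ × ℝ) (i : Fin N) : ℝ × ℝ →L[ℝ] ℂ :=
  (ContinuousLinearMap.proj i).comp (((fderiv ℂ f (zc p)).restrictScalars ℝ).comp xiL)

def Cent {N : ℕ} (f : ℂ → (Fin N → ℂ)) (p : ℝ × ℝ) (i : Fin N) : ℝ × ℝ →L[ℝ] ℂ :=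
  (Complex.conjCLE.toContinuousLinearMap).comp (Dent f p i)

def nOf {N : ℕ} (f : ℂ → (Fin N → ℂ)) (p : ℝ × ℝ) : ℂ :=
  ∑ k, (starRingEnd ℂ) (f (zc p) k) * (f (zc p) k)

def Dnp {N : ℕ} (f : ℂ → (Fin N → ℂ)) (p : ℝ × ℝ) : ℝ × ℝ →L[ℝ] ℂ :=
  ∑ k, ((starRingEnd ℂ) (f (zc p) k) • Dent f p k + (f (zc p) k) • Cent f p k)

def DE {N : ℕ} (f : ℂ → (Fin N → ℂ)) (p : ℝ × ℝ) (i j : Fin N) : ℝ × ℝ →L[ℝ] ℂ :=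
  (nOf f p)⁻¹ • ((f (zc p) i) • Cent f p j + ((starRingEnd ℂ) (f (zc p) j)) • Dent f p i)
    + ((f (zc p) i) * (starRingEnd ℂ) (f (zc p) j)) •
        ((((1 : ℂ →L[ℂ] ℂ).smulRight (-((nOf f p) ^ 2)⁻¹)).restrictScalars ℝ).comp (Dnp f p))

def DEmat {N : ℕ} (f : ℂ → (Fin N → ℂ)) (p : ℝ × ℝ) :
    ℝ × ℝ →L[ℝ] Matrix (Fin N) (Fin N) ℂ :=
  ContinuousLinearMap.pi fun i => ContinuousLinearMap.pi fun j => DE f p i j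

lemma DEmat_apply {N : ℕ} (f : ℂ → (Fin N → ℂ)) (p : ℝ × ℝ) (e : ℝ × ℝ) (i j : Fin N) :
    DEmat f p e i j = DE f p i j e := rfl

lemma projOf_hasFDerivAt {N : ℕ} (f : ℂ → (Fin N → ℂ)) (hf : Differentiable ℂ f)
    (p : ℝ × ℝ) (hn : nOf f p ≠ 0) :
    HasFDerivAt (projOf f) (DEmat f p) p := by
  have hcoe : ⇑(xiL) = zc := by
    funext q; simp [xiL, zc, Complex.equivRealProdCLM_symm_apply]
  have hξ : HasFDerivAt zc xiL p := hcoe ▸ xiL.hasFDerivAt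
  have hfz : HasFDerivAt f ((fderiv ℂ f (zc p)).restrictScalars ℝ) (zc p) :=
    (hf (zc p)).hasFDerivAt.restrictScalars ℝ
  have hg : HasFDerivAt (fun q => f (zc q)) (((fderiv ℂ f (zc p)).restrictScalars ℝ).comp xiL) p :=
    hfz.comp p hξ
  have hgi : ∀ i, HasFDerivAt (fun q => f (zc q) i) (Dent f p i) p := fun i =>
    (ContinuousLinearMap.proj i : (Fin N → ℂ) →L[ℝ] ℂ).hasFDerivAt.comp p hg
  have hconj : ∀ i, HasFDerivAt (fun q => (starRingEnd ℂ) (f (zc q) i)) (Cent f p i) p := fun i =>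
    (Complex.conjCLE.toContinuousLinearMap).hasFDerivAt.comp p (hgi i)
  have hnpd : HasFDerivAt (fun q => nOf f q) (Dnp f p) p := by
    apply HasFDerivAt.fun_sum fun k _ => ?_
    exact (hconj k).mul (hgi k)
  have hinv : HasFDerivAt (fun q => (nOf f q)⁻¹)
      ((((1 : ℂ →L[ℂ] ℂ).smulRight (-((nOf f p) ^ 2)⁻¹)).restrictScalars ℝ).comp (Dnp f p)) p :=
    ((hasFDerivAt_inv hn).restrictScalars ℝ).comp p hnpd
  have hE : ∀ i j, HasFDerivAt (fun q => (nOf f q)⁻¹ * ((f (zc q) i) * (starRingEnd ℂ) (f (zc q) j)))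
      (DE f p i j) p := fun i j => hinv.mul ((hgi i).mul (hconj j))
  apply hasFDerivAt_pi.mpr; intro i
  apply hasFDerivAt_pi.mpr; intro j
  have heq : (fun q => projOf f q i j)
      = fun q => (nOf f q)⁻¹ * ((f (zc q) i) * (starRingEnd ℂ) (f (zc q) j)) := by
    funext q
    simp [projOf, nOf, zc, vecMulVec_apply, dotProduct, Complex.star_def]
  rw [heq]
  exact hE i j

lemma dp_projOf {N : ℕ} (f : ℂ → (Fin N → ℂ)) (hf : Differentiable ℂ f)
    (p : ℝ × ℝ) (hn : nOf f p ≠ 0) :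
    dp (projOf f) p =
      (-((nOf f p)⁻¹ * (nOf f p)⁻¹ *
          (∑ k, (starRingEnd ℂ) (f (zc p) k) * fderiv ℂ f (zc p) 1 k))) •
          vecMulVec (f (zc p)) (star (f (zc p)))
        + (nOf f p)⁻¹ • vecMulVec (fderiv ℂ f (zc p) 1) (star (f (zc p))) := by
  have hP := projOf_hasFDerivAt f hf p hn
  have hI : fderiv ℂ f (zc p) Complex.I = Complex.I • fderiv ℂ f (zc p) 1 := by
    conv_lhs => rw [show Complex.I = Complex.I • (1:ℂ) by simp]
    exact (fderiv ℂ f (zc p)).map_smul _ _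
  have h10 : xiL (1,0) = 1 := by simp [xiL, Complex.equivRealProdCLM_symm_apply]
  have h01 : xiL (0,1) = Complex.I := by simp [xiL, Complex.equivRealProdCLM_symm_apply]
  rw [dp, hP.fderiv]
  ext i j
  rw [Matrix.smul_apply, Matrix.sub_apply, Matrix.smul_apply, DEmat_apply, DEmat_apply]
  simp only [Pi.smul_apply, Pi.sub_apply, Matrix.sub_apply, Matrix.smul_apply,
    ContinuousLinearMap.pi_apply, smul_eq_mul, Matrix.add_apply, Pi.add_apply,
    DE, Dnp, Cent, Dent, ContinuousLinearMap.add_apply, ContinuousLinearMap.smul_apply,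
    ContinuousLinearMap.comp_apply, ContinuousLinearMap.coe_restrictScalars',
    ContinuousLinearMap.proj_apply, ContinuousLinearMap.smulRight_apply,
    ContinuousLinearMap.one_apply, ContinuousLinearMap.sum_apply,
    h10, h01, hI, Complex.conjCLE_apply, vecMulVec_apply, Pi.star_apply, Complex.star_def,
    _root_.map_mul, map_sum, Complex.conj_I]
  simp only [ContinuousLinearEquiv.coe_coe, Complex.conjCLE_apply, _root_.map_mul,
    Complex.conj_I]
  set u := f (zc p) with hu
  set v := (fderiv ℂ f (zc p)) 1 with hv
  set n := nOf f p with hnn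
  have ha : (∑ x, ((starRingEnd ℂ) (u x) * v x + u x * (starRingEnd ℂ) (v x)) * -(n ^ 2)⁻¹)
      = -(n ^ 2)⁻¹ * ((∑ x, (starRingEnd ℂ) (u x) * v x) + ∑ x, u x * (starRingEnd ℂ) (v x)) := by
    rw [← Finset.sum_mul, Finset.sum_add_distrib]; ring
  have hb : (∑ x, ((starRingEnd ℂ) (u x) * (Complex.I * v x)
        + u x * (-Complex.I * (starRingEnd ℂ) (v x))) * -(n ^ 2)⁻¹)
      = -(n ^ 2)⁻¹ * (Complex.I * (∑ x, (starRingEnd ℂ) (u x) * v x)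
          - Complex.I * ∑ x, u x * (starRingEnd ℂ) (v x)) := by
    rw [← Finset.sum_mul]
    have e : ∀ x : Fin N, (starRingEnd ℂ) (u x) * (Complex.I * v x)
        + u x * (-Complex.I * (starRingEnd ℂ) (v x))
        = Complex.I * ((starRingEnd ℂ) (u x) * v x) + (-Complex.I) * (u x * (starRingEnd ℂ) (v x)) :=
      fun x => by ring
    simp_rw [e]
    rw [Finset.sum_add_distrib, ← Finset.mul_sum, ← Finset.mul_sum]
    ring
  rw [ha, hb]
  linear_combination (-(2:ℂ)⁻¹ * (n⁻¹ * ((starRingEnd ℂ) (u j) * v i - u i * (starRingEnd ℂ) (v j))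
      - u i * (starRingEnd ℂ) (u j) * (n ^ 2)⁻¹ *
        ((∑ x, (starRingEnd ℂ) (u x) * v x) - ∑ x, u x * (starRingEnd ℂ) (v x)))) * Complex.I_sq

lemma dm_projOf {N : ℕ} (f : ℂ → (Fin N → ℂ)) (hf : Differentiable ℂ f)
    (p : ℝ × ℝ) (hn : nOf f p ≠ 0) :
    dm (projOf f) p =
      (-((nOf f p)⁻¹ * (nOf f p)⁻¹ *
          (∑ k, f (zc p) k * (starRingEnd ℂ) (fderiv ℂ f (zc p) 1 k)))) •
          vecMulVec (f (zc p)) (star (f (zc p)))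
        + (nOf f p)⁻¹ • vecMulVec (f (zc p)) (star (fderiv ℂ f (zc p) 1)) := by
  have hP := projOf_hasFDerivAt f hf p hn
  have hI : fderiv ℂ f (zc p) Complex.I = Complex.I • fderiv ℂ f (zc p) 1 := by
    conv_lhs => rw [show Complex.I = Complex.I • (1:ℂ) by simp]
    exact (fderiv ℂ f (zc p)).map_smul _ _
  have h10 : xiL (1,0) = 1 := by simp [xiL, Complex.equivRealProdCLM_symm_apply]
  have h01 : xiL (0,1) = Complex.I := by simp [xiL, Complex.equivRealProdCLM_symm_apply]
  rw [dm, hP.fderiv]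
  ext i j
  rw [Matrix.smul_apply, Matrix.add_apply, Matrix.smul_apply, DEmat_apply, DEmat_apply]
  simp only [Pi.smul_apply, Pi.add_apply, Matrix.add_apply, Matrix.smul_apply, smul_eq_mul,
    DE, Dnp, Cent, Dent, ContinuousLinearMap.add_apply, ContinuousLinearMap.smul_apply,
    ContinuousLinearMap.comp_apply, ContinuousLinearMap.coe_restrictScalars',
    ContinuousLinearMap.proj_apply, ContinuousLinearMap.smulRight_apply,
    ContinuousLinearMap.one_apply, ContinuousLinearMap.sum_apply,
    h10, h01, hI, vecMulVec_apply, Pi.star_apply, Complex.star_def,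
    _root_.map_mul, map_sum, Complex.conj_I]
  simp only [ContinuousLinearEquiv.coe_coe, Complex.conjCLE_apply, _root_.map_mul,
    Complex.conj_I]
  set u := f (zc p) with hu
  set v := (fderiv ℂ f (zc p)) 1 with hv
  set n := nOf f p with hnn
  have ha : (∑ x, ((starRingEnd ℂ) (u x) * v x + u x * (starRingEnd ℂ) (v x)) * -(n ^ 2)⁻¹)
      = -(n ^ 2)⁻¹ * ((∑ x, (starRingEnd ℂ) (u x) * v x) + ∑ x, u x * (starRingEnd ℂ) (v x)) := by
    rw [← Finset.sum_mul, Finset.sum_add_distrib]; ring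
  have hb : (∑ x, ((starRingEnd ℂ) (u x) * (Complex.I * v x)
        + u x * (-Complex.I * (starRingEnd ℂ) (v x))) * -(n ^ 2)⁻¹)
      = -(n ^ 2)⁻¹ * (Complex.I * (∑ x, (starRingEnd ℂ) (u x) * v x)
          - Complex.I * ∑ x, u x * (starRingEnd ℂ) (v x)) := by
    rw [← Finset.sum_mul]
    have e : ∀ x : Fin N, (starRingEnd ℂ) (u x) * (Complex.I * v x)
        + u x * (-Complex.I * (starRingEnd ℂ) (v x))
        = Complex.I * ((starRingEnd ℂ) (u x) * v x) + (-Complex.I) * (u x * (starRingEnd ℂ) (v x)) :=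
      fun x => by ring
    simp_rw [e]
    rw [Finset.sum_add_distrib, ← Finset.mul_sum, ← Finset.mul_sum]
    ring
  rw [ha, hb]
  linear_combination ((2:ℂ)⁻¹ * (n⁻¹ * ((starRingEnd ℂ) (u j) * v i - u i * (starRingEnd ℂ) (v j))
      - u i * (starRingEnd ℂ) (u j) * (n ^ 2)⁻¹ *
        ((∑ x, (starRingEnd ℂ) (u x) * v x) - ∑ x, u x * (starRingEnd ℂ) (v x)))) * Complex.I_sq

lemma vv_mul {N : ℕ} (a b c d : Fin N → ℂ) :
    vecMulVec a b * vecMulVec c d = (b ⬝ᵥ c) • vecMulVec a d := by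
  ext i j
  simp only [Matrix.mul_apply, vecMulVec_apply, Matrix.smul_apply, dotProduct, smul_eq_mul,
    Finset.sum_mul]
  exact Finset.sum_congr rfl fun k _ => by ring


/-- For the projector `P` associated to a nowhere-vanishing holomorphic `f : ℂ → ℂᴺ`,
`P·∂₊P = 0` and `∂₋P·P = 0`; consequently `[∂₊P, P] = ∂₊P`, `[∂₋P, P] = −∂₋P`, and the
lowering image `∂₋P·P·∂₊P` vanishes identically (`Π₋P = 0`). -/
theorem holomorphic_projector_identities {N : ℕ} (f : ℂ → (Fin N → ℂ))
    (hf : Differentiable ℂ f) (hf0 : ∀ ξ, f ξ ≠ 0)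
    (P : ℝ × ℝ → Matrix (Fin N) (Fin N) ℂ) (hPdef : P = projOf f) :
    ∀ p, P p * dp P p = 0
      ∧ dm P p * P p = 0
      ∧ dp P p * P p - P p * dp P p = dp P p
      ∧ dm P p * P p - P p * dm P p = -dm P p
      ∧ dm P p * P p * dp P p = 0 := by
  subst hPdef
  intro p
  set u := f (zc p) with hu
  set v := fderiv ℂ f (zc p) 1 with hv
  have hns : nOf f p = star u ⬝ᵥ u := by
    simp [nOf, dotProduct, Complex.star_def, mul_comm]; rfl
  open scoped ComplexOrder in
  have hn0 : star u ⬝ᵥ u ≠ 0 := fun h => hf0 (zc p) (dotProduct_star_self_eq_zero.mp h)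
  have hn : nOf f p ≠ 0 := by rw [hns]; exact hn0
  have hS1 : (∑ k, (starRingEnd ℂ) (u k) * v k) = star u ⬝ᵥ v := by
    simp [dotProduct, Complex.star_def]
  have hS2 : (∑ k, u k * (starRingEnd ℂ) (v k)) = star v ⬝ᵥ u := by
    simp only [dotProduct, Pi.star_apply, Complex.star_def]
    exact Finset.sum_congr rfl fun k _ => by ring
  have hPp : projOf f p = (star u ⬝ᵥ u)⁻¹ • vecMulVec u (star u) := rfl
  have hdp : dp (projOf f) p =
      (-((star u ⬝ᵥ u)⁻¹ * (star u ⬝ᵥ u)⁻¹ * (star u ⬝ᵥ v))) • vecMulVec u (star u)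
        + (star u ⬝ᵥ u)⁻¹ • vecMulVec v (star u) := by
    rw [dp_projOf f hf p hn, hns, ← hu, ← hv, hS1]
  have hdm : dm (projOf f) p =
      (-((star u ⬝ᵥ u)⁻¹ * (star u ⬝ᵥ u)⁻¹ * (star v ⬝ᵥ u))) • vecMulVec u (star u)
        + (star u ⬝ᵥ u)⁻¹ • vecMulVec u (star v) := by
    rw [dm_projOf f hf p hn, hns, ← hu, ← hv, hS2]
  set n := star u ⬝ᵥ u with hnd
  set c := star u ⬝ᵥ v with hcd
  set c' := star v ⬝ᵥ u with hcd'
  have hsvu : star u ⬝ᵥ v = c := rfl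
  have key1 : projOf f p * dp (projOf f) p = 0 := by
    rw [hPp, hdp]
    rw [Matrix.mul_add, Matrix.smul_mul, Matrix.smul_mul, Matrix.mul_smul, Matrix.mul_smul,
      vv_mul, vv_mul, ← hnd, hsvu, smul_smul, smul_smul, smul_smul, smul_smul, ← add_smul]
    convert zero_smul ℂ _
    field_simp
    ring
  have key2 : dm (projOf f) p * projOf f p = 0 := by
    rw [hPp, hdm]
    rw [Matrix.add_mul, Matrix.smul_mul, Matrix.smul_mul, Matrix.mul_smul, Matrix.mul_smul,
      vv_mul, vv_mul, ← hnd, ← hcd', smul_smul, smul_smul, smul_smul, smul_smul, ← add_smul]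
    convert zero_smul ℂ _
    field_simp
    ring
  have key3 : dp (projOf f) p * projOf f p = dp (projOf f) p := by
    rw [hPp, hdp]
    rw [Matrix.add_mul, Matrix.smul_mul, Matrix.smul_mul, Matrix.mul_smul, Matrix.mul_smul,
      vv_mul, vv_mul, ← hnd, smul_smul, smul_smul, smul_smul, smul_smul]
    congr 1 <;> [skip; skip] <;> congr 1 <;> field_simp <;> ring
  have key4 : projOf f p * dm (projOf f) p = dm (projOf f) p := by
    rw [hPp, hdm]
    rw [Matrix.mul_add, Matrix.smul_mul, Matrix.smul_mul, Matrix.mul_smul, Matrix.mul_smul,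
      vv_mul, vv_mul, ← hnd, smul_smul, smul_smul, smul_smul, smul_smul]
    congr 1 <;> [skip; skip] <;> congr 1 <;> field_simp <;> ring
  exact ⟨key1, key2, by rw [key3, key1, sub_zero],
    by rw [key2, key4, zero_sub], by rw [key2, Matrix.zero_mul]⟩
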